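/- Let n ≥ 1 and let w : ℝⁿ × GL(n,ℝ)⁺ → ℝ be twice continuously differentiable in the matrix variable, where GL(n,ℝ)⁺ is the open set of matrices with positive determinant. Define the 1-form Dw by Dw(y,F)(H) = w(y,F)·tr(H) − Σ_{i,j} (∂w/∂F_{ij})(y,F)·(F·H)_{ij} for H ∈ ℝ^{n×n}, and for a 1-form ω (a map assigning to (y,F) a linear functional on ℝ^{n×n}, differentiable in F) define the 2-form Dω by Dω(y,F)(H,P) = D(ω_H)(y,F)(P) − D(ω_P)(y,F)(H) + ω(y,F)(P·H − H·P), where ω_H(y,F) := ω(y,F)(H) for a fixed matrix H. Then D(Dw) = 0, i.e. for all y ∈ ℝⁿ, all F ∈ GL(n,ℝ)⁺, and all H, P ∈ ℝ^{n×n}: D(Dw)(y,F)(H,P) = 0. -/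

import Mathlib

open MeasureTheory

noncomputable section

/-- Partial derivative of a function of a matrix with respect to the entry `(i,j)`,
defined as a directional derivative along the standard basis matrix `E_{ij}`. -/
def pderivF {n : ℕ} (W : Matrix (Fin n) (Fin n) ℝ → ℝ)
    (F : Matrix (Fin n) (Fin n) ℝ) (i j : Fin n) : ℝ :=
  deriv (fun t : ℝ => W (F + t • Matrix.single i j 1)) 0

/-- The derivation `D : Λ⁰(M) → Λ¹(M)`:
`Dw(y,F)(H) = w(y,F)·tr(H) − Σ_{i,j} (∂w/∂F_{ij})(y,F)·(F·H)_{ij}`. -/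
def Dop {n : ℕ} (w : (Fin n → ℝ) → Matrix (Fin n) (Fin n) ℝ → ℝ)
    (y : Fin n → ℝ) (F H : Matrix (Fin n) (Fin n) ℝ) : ℝ :=
  w y F * H.trace - ∑ i, ∑ j, pderivF (w y) F i j * (F * H) i j

/-- The derivation `D : Λ¹(M) → Λ²(M)`:
`Dω(y,F)(H,P) = D(ω_H)(y,F)(P) − D(ω_P)(y,F)(H) + ω(y,F)([P,H])`. -/
def Dop1 {n : ℕ}
    (ω : (Fin n → ℝ) → Matrix (Fin n) (Fin n) ℝ → Matrix (Fin n) (Fin n) ℝ → ℝ)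
    (y : Fin n → ℝ) (F H P : Matrix (Fin n) (Fin n) ℝ) : ℝ :=
  Dop (fun y' F' => ω y' F' H) y F P - Dop (fun y' F' => ω y' F' P) y F H
    + ω y F (P * H - H * P)

section Aux

variable {n : ℕ}

local instance matNACG : NormedAddCommGroup (Matrix (Fin n) (Fin n) ℝ) :=
  inferInstanceAs (NormedAddCommGroup (Fin n → Fin n → ℝ))

local instance matNS : NormedSpace ℝ (Matrix (Fin n) (Fin n) ℝ) :=
  inferInstanceAs (NormedSpace ℝ (Fin n → Fin n → ℝ))

private lemma sum_repr (φ : Matrix (Fin n) (Fin n) ℝ →L[ℝ] ℝ)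
    (M K : Matrix (Fin n) (Fin n) ℝ) :
    ∑ i, ∑ j, φ (Matrix.single i j 1 * K) * M i j = φ (M * K) := by
  have h : (M * K : Matrix (Fin n) (Fin n) ℝ)
      = ∑ i, ∑ j, M i j • (Matrix.single i j 1 * K) := by
    conv_lhs => rw [Matrix.matrix_eq_sum_single M]
    rw [Finset.sum_mul]
    refine Finset.sum_congr rfl fun i _ => ?_
    rw [Finset.sum_mul]
    refine Finset.sum_congr rfl fun j _ => ?_
    rw [show Matrix.single i j (M i j)
        = M i j • Matrix.single i j (1:ℝ) by
      rw [Matrix.smul_single, smul_eq_mul, mul_one], Matrix.smul_mul]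
  rw [h, map_sum]
  refine Finset.sum_congr rfl fun i _ => ?_
  rw [map_sum]
  refine Finset.sum_congr rfl fun j _ => ?_
  rw [_root_.map_smul, smul_eq_mul, mul_comm]

private lemma sum_repr' (φ : Matrix (Fin n) (Fin n) ℝ →L[ℝ] ℝ)
    (M : Matrix (Fin n) (Fin n) ℝ) :
    ∑ i, ∑ j, φ (Matrix.single i j 1) * M i j = φ M := by
  simpa using sum_repr φ M 1

private lemma line_hasDerivAt (F E : Matrix (Fin n) (Fin n) ℝ) :
    HasDerivAt (fun t : ℝ => F + t • E) E 0 := by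
  simpa using ((hasDerivAt_id (0 : ℝ)).smul_const E).const_add F

private lemma pderiv_eq {W : Matrix (Fin n) (Fin n) ℝ → ℝ} {F : Matrix (Fin n) (Fin n) ℝ}
    (hW : DifferentiableAt ℝ W F) (i j : Fin n) :
    pderivF W F i j = fderiv ℝ W F (Matrix.single i j 1) := by
  have h0 : F + (0:ℝ) • (Matrix.single i j 1 : Matrix (Fin n) (Fin n) ℝ) = F := by
    simp
  have hl : HasFDerivAt W (fderiv ℝ W F)
      (F + (0:ℝ) • (Matrix.single i j 1 : Matrix (Fin n) (Fin n) ℝ)) := by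
    rw [h0]; exact hW.hasFDerivAt
  exact (hl.comp_hasDerivAt 0 (line_hasDerivAt F _)).deriv

/-- the sequence `Λ⁰(M) → Λ¹(M) → Λ²(M)` is semi-exact: `D(Dw) = 0` on
`GL(n,ℝ)⁺` for any `w` twice continuously differentiable in the matrix variable. -/
theorem D_squared_eq_zero {n : ℕ} (hn : 1 ≤ n)
    (w : (Fin n → ℝ) → Matrix (Fin n) (Fin n) ℝ → ℝ)
    (hw : ∀ y : Fin n → ℝ, ContDiffOn ℝ 2 (fun A : Fin n → Fin n → ℝ => w y (Matrix.of A))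
      {A : Fin n → Fin n → ℝ | 0 < (Matrix.of A).det}) :
    ∀ (y : Fin n → ℝ) (F : Matrix (Fin n) (Fin n) ℝ), 0 < F.det →
      ∀ H P : Matrix (Fin n) (Fin n) ℝ, Dop1 (fun y' F' H' => Dop w y' F' H') y F H P = 0 := by
  intro y F hF H P
  classical
  set U : Set (Matrix (Fin n) (Fin n) ℝ) := {A | 0 < A.det} with hUdef
  have hU : IsOpen U := isOpen_lt continuous_const (Continuous.matrix_det continuous_id)
  have hFU : F ∈ U := hF
  have hW2 : ContDiffOn ℝ 2 (w y) U := hw y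
  have hdiffOn : ∀ A ∈ U, DifferentiableAt ℝ (w y) A := fun A hA =>
    (hW2.differentiableOn two_ne_zero).differentiableAt (hU.mem_nhds hA)
  have hdiffF : DifferentiableAt ℝ (w y) F := hdiffOn F hFU
  have hd1 : ContDiffOn ℝ 1 (fderiv ℝ (w y)) U :=
    hW2.fderiv_of_isOpen hU (by norm_num)
  have hdF' : DifferentiableAt ℝ (fderiv ℝ (w y)) F :=
    (hd1.differentiableOn one_ne_zero).differentiableAt (hU.mem_nhds hFU)
  -- rewrite Dop via fderiv on U
  have key0 : ∀ A ∈ U, ∀ K : Matrix (Fin n) (Fin n) ℝ,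
      Dop w y A K = w y A * K.trace - fderiv ℝ (w y) A (A * K) := by
    intro A hA K
    have hdA : DifferentiableAt ℝ (w y) A := hdiffOn A hA
    simp only [Dop]
    congr 1
    calc ∑ i, ∑ j, pderivF (w y) A i j * (A * K) i j
        = ∑ i, ∑ j, fderiv ℝ (w y) A (Matrix.single i j 1) * (A * K) i j := by
          refine Finset.sum_congr rfl fun i _ => Finset.sum_congr rfl fun j _ => ?_
          rw [pderiv_eq hdA]
      _ = fderiv ℝ (w y) A (A * K) := sum_repr' _ _
  -- the partial derivatives of F' ↦ Dop w y F' K at F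
  have hpd : ∀ (K : Matrix (Fin n) (Fin n) ℝ) (k l : Fin n),
      pderivF (fun F' => Dop w y F' K) F k l
        = fderiv ℝ (w y) F (Matrix.single k l 1) * K.trace
          - (fderiv ℝ (fderiv ℝ (w y)) F (Matrix.single k l 1) (F * K)
            + fderiv ℝ (w y) F (Matrix.single k l 1 * K)) := by
    intro K k l
    set E : Matrix (Fin n) (Fin n) ℝ := Matrix.single k l 1 with hE
    have h0 : F + (0:ℝ) • E = F := by simp
    have hcont : Continuous fun t : ℝ => F + t • E :=
      continuous_const.add (continuous_id.smul continuous_const)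
    have hmem : ∀ᶠ t in nhds (0:ℝ), F + t • E ∈ U := by
      refine hcont.continuousAt.eventually_mem ?_
      rw [h0]; exact hU.mem_nhds hFU
    have hev : (fun t : ℝ => Dop w y (F + t • E) K)
        =ᶠ[nhds 0] (fun t : ℝ => w y (F + t • E) * K.trace
            - fderiv ℝ (w y) (F + t • E) ((F + t • E) * K)) :=
      hmem.mono fun t ht => key0 _ ht K
    simp only [pderivF]
    rw [hev.deriv_eq]
    have h1 : HasDerivAt (fun t : ℝ => w y (F + t • E)) (fderiv ℝ (w y) F E) 0 := by
      have hl : HasFDerivAt (w y) (fderiv ℝ (w y) F) (F + (0:ℝ) • E) := by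
        rw [h0]; exact hdiffF.hasFDerivAt
      exact hl.comp_hasDerivAt 0 (line_hasDerivAt F E)
    have h2 : HasDerivAt (fun t : ℝ => fderiv ℝ (w y) (F + t • E))
        (fderiv ℝ (fderiv ℝ (w y)) F E) 0 := by
      have hl : HasFDerivAt (fderiv ℝ (w y)) (fderiv ℝ (fderiv ℝ (w y)) F)
          (F + (0:ℝ) • E) := by
        rw [h0]; exact hdF'.hasFDerivAt
      exact hl.comp_hasDerivAt 0 (line_hasDerivAt F E)
    have h3 : HasDerivAt (fun t : ℝ => (F + t • E) * K) (E * K) 0 := by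
      have e3 : (fun t : ℝ => (F + t • E) * K) = fun t : ℝ => F * K + t • (E * K) := by
        funext t
        rw [Matrix.add_mul, Matrix.smul_mul]
      rw [e3]
      simpa using ((hasDerivAt_id (0 : ℝ)).smul_const (E * K)).const_add (F * K)
    have h5 := (h1.mul_const K.trace).sub (h2.clm_apply h3)
    have h6 := h5.deriv
    simp only [zero_smul, add_zero, h0] at h6
    exact h6
  -- summed version
  have hsum2 : ∀ K Q : Matrix (Fin n) (Fin n) ℝ,
      (∑ k, ∑ l, pderivF (fun F' => Dop w y F' K) F k l * (F * Q) k l)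
        = fderiv ℝ (w y) F (F * Q) * K.trace
          - fderiv ℝ (fderiv ℝ (w y)) F (F * Q) (F * K)
          - fderiv ℝ (w y) F (F * Q * K) := by
    intro K Q
    have step : ∀ k l : Fin n,
        pderivF (fun F' => Dop w y F' K) F k l * (F * Q) k l
          = fderiv ℝ (w y) F (Matrix.single k l 1) * (F * Q) k l * K.trace
            - ((fderiv ℝ (fderiv ℝ (w y)) F).flip (F * K)) (Matrix.single k l 1)
                * (F * Q) k l
            - fderiv ℝ (w y) F (Matrix.single k l 1 * K) * (F * Q) k l := by
      intro k l
      rw [hpd K k l, ContinuousLinearMap.flip_apply]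
      ring
    calc (∑ k, ∑ l, pderivF (fun F' => Dop w y F' K) F k l * (F * Q) k l)
        = ∑ k, ∑ l, (fderiv ℝ (w y) F (Matrix.single k l 1) * (F * Q) k l * K.trace
            - ((fderiv ℝ (fderiv ℝ (w y)) F).flip (F * K)) (Matrix.single k l 1)
                * (F * Q) k l
            - fderiv ℝ (w y) F (Matrix.single k l 1 * K) * (F * Q) k l) := by
          exact Finset.sum_congr rfl fun k _ => Finset.sum_congr rfl fun l _ => step k l
      _ = (∑ k, ∑ l, fderiv ℝ (w y) F (Matrix.single k l 1) * (F * Q) k l) * K.trace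
            - (∑ k, ∑ l, ((fderiv ℝ (fderiv ℝ (w y)) F).flip (F * K))
                (Matrix.single k l 1) * (F * Q) k l)
            - ∑ k, ∑ l, fderiv ℝ (w y) F (Matrix.single k l 1 * K) * (F * Q) k l := by
          simp only [Finset.sum_sub_distrib, ← Finset.sum_mul]
      _ = fderiv ℝ (w y) F (F * Q) * K.trace
            - fderiv ℝ (fderiv ℝ (w y)) F (F * Q) (F * K)
            - fderiv ℝ (w y) F (F * Q * K) := by
          rw [sum_repr' (fderiv ℝ (w y) F) (F * Q),
            sum_repr' ((fderiv ℝ (fderiv ℝ (w y)) F).flip (F * K)) (F * Q),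
            sum_repr (fderiv ℝ (w y) F) (F * Q) K, ContinuousLinearMap.flip_apply]
  -- symmetry of the second derivative
  have hCAt : ContDiffAt ℝ 2 (w y) F := hW2.contDiffAt (hU.mem_nhds hFU)
  have hsym : fderiv ℝ (fderiv ℝ (w y)) F (F * P) (F * H)
      = fderiv ℝ (fderiv ℝ (w y)) F (F * H) (F * P) :=
    (hCAt.isSymmSndFDerivAt (by simp [minSmoothness_of_isRCLikeNormedField])) (F * P) (F * H)
  -- assemble
  have e : Dop1 (fun y' F' H' => Dop w y' F' H') y F H P
      = Dop (fun y' F' => Dop w y' F' H) y F P - Dop (fun y' F' => Dop w y' F' P) y F H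
        + Dop w y F (P * H - H * P) := rfl
  have e2 : ∀ K Q : Matrix (Fin n) (Fin n) ℝ,
      Dop (fun y' F' => Dop w y' F' K) y F Q
        = Dop w y F K * Q.trace
          - ∑ k, ∑ l, pderivF (fun F' => Dop w y F' K) F k l * (F * Q) k l := fun K Q => rfl
  have htr : (P * H - H * P).trace = 0 := by
    rw [Matrix.trace_sub, Matrix.trace_mul_comm, sub_self]
  have hFsub : F * (P * H - H * P) = F * P * H - F * H * P := by
    rw [Matrix.mul_sub, Matrix.mul_assoc, Matrix.mul_assoc]
  rw [e, e2 H P, e2 P H, hsum2 H P, hsum2 P H, key0 F hFU H, key0 F hFU P,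
    key0 F hFU (P * H - H * P), htr, hFsub, map_sub, hsym]
  ring

end Aux
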